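/- Conditional-probability swap identity: Let s, s̃ ∈ S^N with s̃ = σ(s) for a permutation σ fixing i (σ(i) = i). Suppose joint actions satisfy P(u_t = σ(a) | x_t = σ(s), u^i_t = a^i) = P(u_t = a | x_t = s, u^i_t = a^i) for all a, and the state transition is product-form with empirical-measure dependence as above. Then for any s' ∈ S^N, P(x_{t+1} = σ(s') | x_t = s̃, u^i_t = a^i) = P(x_{t+1} = s' | x_t = s, u^i_t = a^i); consequently, for any set W ⊆ S^N closed under permutations fixing no constraint beyond empirical-measure and i-th coordinate equality (i.e., W = φ^{−1}(w) for φ(s) = (s^i, μ(·|s))), P(x_{t+1} ∈ W | x_t = s, u^i_t = a^i) = P(x_{t+1} ∈ W | x_t = s̃, u^i_t = a^i). -/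
import Mathlib


open Classical

noncomputable section

/-- The empirical measure (as a probability vector) of a global state `s ∈ S^N`. -/
def empDist {S : Type} [DecidableEq S] {N : ℕ} (s : Fin N → S) : S → ℝ :=
  fun x => ((Finset.univ.filter fun j : Fin N => s j = x).card : ℝ) / (N : ℝ)

/-- Conditional probability `P(x_{t+1} = s' | x_t = s, u^i_t = ai)` obtained by averaging the
product-form transition law over the joint action, whose conditional probability given
`(x_t = s, u^i_t = ai)` is `A s a` supported on `{a : a i = ai}`. -/
def condNext {S U : Type} [Fintype U] [DecidableEq S] [DecidableEq U] {N : ℕ}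
    (Ploc : S → (S → ℝ) → U → S → ℝ)
    (A : (Fin N → S) → (Fin N → U) → ℝ)
    (i : Fin N) (ai : U) (s s' : Fin N → S) : ℝ :=
  ∑ a : Fin N → U,
    if a i = ai then A s a * ∏ j : Fin N, Ploc (s j) (empDist s) (a j) (s' j) else 0

lemma empDist_comp_perm {S : Type} [DecidableEq S] {N : ℕ}
    (σ : Equiv.Perm (Fin N)) (s : Fin N → S) :
    empDist (fun j => s (σ j)) = empDist s := by
  funext x
  unfold empDist
  congr 2
  apply Finset.card_bij (fun j _ => σ j)
  · intro a ha
    simp only [Finset.mem_filter, Finset.mem_univ, true_and] at ha ⊢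
    exact ha
  · intro a _ b _ h
    exact σ.injective h
  · intro b hb
    refine ⟨σ.symm b, ?_, by simp⟩
    simp only [Finset.mem_filter, Finset.mem_univ, true_and, Equiv.apply_symm_apply] at hb ⊢
    exact hb

/-- Conditional-probability swap identity: for a permutation `σ` fixing player `i`, if the joint
action law is `σ`-symmetric, then
`P(x_{t+1} = σ(s') | x_t = σ(s), u^i_t = ai) = P(x_{t+1} = s' | x_t = s, u^i_t = ai)`;
consequently the conditional probability of landing in `φ⁻¹(w)`, where `φ(s) = (s^i, μ(·|s))`,
is the same from `s` and from `σ(s)`. -/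
theorem conditional_probability_swap
    {S U : Type} [Fintype S] [Fintype U] [DecidableEq S] [DecidableEq U] {N : ℕ}
    (i : Fin N) (σ : Equiv.Perm (Fin N)) (hσi : σ i = i)
    (Ploc : S → (S → ℝ) → U → S → ℝ)
    (A : (Fin N → S) → (Fin N → U) → ℝ)
    (hA : ∀ (s : Fin N → S) (a : Fin N → U),
      A (fun j => s (σ j)) (fun j => a (σ j)) = A s a)
    (s : Fin N → S) (ai : U) :
    (∀ s' : Fin N → S,
      condNext Ploc A i ai (fun j => s (σ j)) (fun j => s' (σ j))
        = condNext Ploc A i ai s s') ∧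
    (∀ w : S × (S → ℝ),
      (∑ s' ∈ Finset.univ.filter
          (fun s' : Fin N → S => s' i = w.1 ∧ empDist s' = w.2),
        condNext Ploc A i ai (fun j => s (σ j)) s')
      = ∑ s' ∈ Finset.univ.filter
          (fun s' : Fin N → S => s' i = w.1 ∧ empDist s' = w.2),
        condNext Ploc A i ai s s') := by
  have key : ∀ s' : Fin N → S,
      condNext Ploc A i ai (fun j => s (σ j)) (fun j => s' (σ j))
        = condNext Ploc A i ai s s' := by
    intro s'
    unfold condNext
    rw [empDist_comp_perm]
    -- reindex the sum over joint actions by `b ↦ b ∘ σ`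
    let e : (Fin N → U) ≃ (Fin N → U) :=
      { toFun := fun b => fun j => b (σ j)
        invFun := fun b => fun j => b (σ.symm j)
        left_inv := fun b => by funext j; simp
        right_inv := fun b => by funext j; simp }
    rw [← Equiv.sum_comp e
      (fun a : Fin N → U =>
        if a i = ai then
          A (fun j => s (σ j)) a *
            ∏ j : Fin N,
              Ploc (s (σ j)) (empDist s) (a j) (s' (σ j))
        else 0)]
    apply Finset.sum_congr rfl
    intro b _
    have hb : (e b) = fun j => b (σ j) := rfl
    rw [hb]
    simp only [hσi]
    congr 1
    rw [hA s b]
    congr 1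
    exact Equiv.prod_comp σ (fun j => Ploc (s j) (empDist s) (b j) (s' j))
  refine ⟨key, ?_⟩
  intro w
  apply Finset.sum_nbij' (fun s' => fun j => s' (σ.symm j)) (fun s' => fun j => s' (σ j))
  · intro t ht
    simp only [Finset.mem_filter, Finset.mem_univ, true_and] at ht ⊢
    constructor
    · have hσsi : σ.symm i = i := σ.symm_apply_eq.mpr hσi.symm
      rw [hσsi]; exact ht.1
    · rw [empDist_comp_perm σ.symm t]; exact ht.2
  · intro t ht
    simp only [Finset.mem_filter, Finset.mem_univ, true_and] at ht ⊢
    constructor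
    · rw [hσi]; exact ht.1
    · rw [empDist_comp_perm σ t]; exact ht.2
  · intro t _; funext j; simp
  · intro t _; funext j; simp
  · intro t _
    have : (fun j => (fun j' => t (σ.symm j')) (σ j)) = t := by
      funext j; simp
    rw [← key (fun j => t (σ.symm j)), this]

end
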